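/- Fix integers n, m ≥ 1, let 1 ≤ j ≤ n, let S = {i_1 < ⋯ < i_{n+1−j}} ∈ X_j and S' = S \ {i_1}. (i) If j is odd, then B([i_1−j, i_1−1] ∪ S') and B([i_1−j+1, i_1] ∪ S') are vertices of Λ(S); moreover, if i_1+1 ∉ S and i_1+1 ≤ n+m, then A([j−1] ∪ {i_1+1} ∪ S') is a vertex of Λ(S). (ii) If j is even, then A([j] ∪ S') and B([i_1−j+1, i_1] ∪ S') are vertices of Λ(S). -/

import Mathlib

noncomputable section
attribute [local instance] Classical.propDecidable

/-- A finite multigraph with colored edges, given by a finite vertex set `Vs` inside an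
ambient type `V` and a finite set of edges; an edge is a triple `(u, v, i)` recording its
two endpoints (in an arbitrary chosen orientation) and its color `i`.  Since every vertex
of an admissible colored multigraph is incident to at most one edge of each color, this
faithfully represents the multigraphs occurring in crystallization theory. -/
structure MG (V : Type) where
  Vs : Finset V
  Es : Finset (V × V × ℕ)

namespace MG

variable {V : Type}

/-- The edge `e` joins the vertices `u` and `v`, i.e. `φ(e) = {u, v}`. -/
def joins (e : V × V × ℕ) (u v : V) : Prop :=
  (e.1 = u ∧ e.2.1 = v) ∨ (e.1 = v ∧ e.2.1 = u)

/-- The vertex `v` is an endpoint of the edge `e`. -/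
def incid (e : V × V × ℕ) (v : V) : Prop := e.1 = v ∨ e.2.1 = v

/-- Adjacency in the spanning subgraph `G_S` of edges whose color lies in `S`. -/
def Adj (G : MG V) (S : Finset ℕ) (u v : V) : Prop :=
  u ∈ G.Vs ∧ v ∈ G.Vs ∧ ∃ e ∈ G.Es, e.2.2 ∈ S ∧ joins e u v

/-- `G.Conn S u v`: `u` and `v` are connected by a path of edges of `G_S`.
Two vertices are *disconnected* on `G_S` if `¬ G.Conn S u v`. -/
def Conn (G : MG V) (S : Finset ℕ) : V → V → Prop :=
  Relation.ReflTransGen (G.Adj S)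

/-- Well-formedness of a multigraph with colors in `K`: endpoints of edges are vertices,
there are no loops, and all colors lie in `K`. -/
def WF (K : Finset ℕ) (G : MG V) : Prop :=
  ∀ e ∈ G.Es, e.1 ∈ G.Vs ∧ e.2.1 ∈ G.Vs ∧ e.1 ≠ e.2.1 ∧ e.2.2 ∈ K

/-- Admissibility of a `K`-colored multigraph: it is (loopless and) connected, and for
each color `i ∈ K` the edges of color `i` form a perfect matching of the vertex set. -/
def Admissible (K : Finset ℕ) (G : MG V) : Prop :=
  WF K G ∧ (∀ u ∈ G.Vs, ∀ v ∈ G.Vs, G.Conn K u v) ∧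
    (∀ i ∈ K, ∀ v ∈ G.Vs, ∃! e, e ∈ G.Es ∧ e.2.2 = i ∧ incid e v)

/-- The connected component of `G_S` containing the vertex `v`. -/
def comp (G : MG V) (S : Finset ℕ) (v : V) : Set V := {w | G.Conn S v w}

/-- The poset `P_Λ` associated to a `K`-colored multigraph: its elements are pairs
`(H, S)` of a subset `S ⊆ K` and a connected component `H` of `G_S`. -/
def PElem (K : Finset ℕ) (G : MG V) : Type :=
  {p : Set V × Finset ℕ // p.2 ⊆ K ∧ ∃ v ∈ G.Vs, p.1 = G.comp p.2 v}

/-- The order of `P_Λ`: `(H, S) ≤ (H', S')` iff `S' ⊆ S` and `H' ⊆ H`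
(so that `(G, K)` is the least element). -/
instance (K : Finset ℕ) (G : MG V) : PartialOrder (PElem K G) where
  le p q := q.1.2 ⊆ p.1.2 ∧ q.1.1 ⊆ p.1.1
  le_refl p := ⟨subset_rfl, subset_rfl⟩
  le_trans p q r h₁ h₂ := ⟨h₂.1.trans h₁.1, h₂.2.trans h₁.2⟩
  le_antisymm p q h₁ h₂ :=
    Subtype.ext (Prod.ext (subset_antisymm h₂.2 h₁.2) (subset_antisymm h₂.1 h₁.1))

/-- The subgraph of `G` with vertex set `H` and the edges of `G_S` joining vertices
of `H`, viewed as an `S`-colored multigraph. -/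
def restrict (G : MG V) (S : Finset ℕ) (H : Set V) : MG V where
  Vs := G.Vs.filter (· ∈ H)
  Es := G.Es.filter fun e => e.2.2 ∈ S ∧ e.1 ∈ H ∧ e.2.1 ∈ H

/-- The cancelling `del_{x,y} Λ` of the pair of vertices `x, y` in a `K`-colored
multigraph: delete `x`, `y` and all edges incident to them, and for every color
`i ∈ K` not realized on an edge joining `x` and `y`, add a new edge of color `i`
joining the color-`i` neighbour of `x` to the color-`i` neighbour of `y`. -/
def del (K : Finset ℕ) (G : MG V) (x y : V) : MG V :=
  { Vs := G.Vs \ {x, y}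
    Es := (G.Es.filter fun e => ¬ incid e x ∧ ¬ incid e y) ∪
      ((G.Vs ×ˢ G.Vs ×ˢ
          (K \ (K.filter fun i => ∃ e ∈ G.Es, e.2.2 = i ∧ joins e x y))).filter fun q =>
        q.1 ≠ x ∧ q.1 ≠ y ∧ q.2.1 ≠ x ∧ q.2.1 ≠ y ∧
        (∃ e ∈ G.Es, e.2.2 = q.2.2 ∧ joins e x q.1) ∧
        (∃ e ∈ G.Es, e.2.2 = q.2.2 ∧ joins e y q.2.1)) }

end MG

/-- The four symbols `A`, `B`, `C`, `D` labelling the vertices of the colored graph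
`Λ(n,m)`: a vertex of `Λ(n,m)` is a pair `(X, S)` (written `X(S)` in the paper) of a
symbol `X ∈ {A,B,C,D}` and an `n`-element subset `S ⊆ {1,…,n+m}`. -/
inductive Lbl | A | B | C | D
deriving DecidableEq

/-- The `n`-element subsets of `{1,…,n+m}`. -/
def nsubs (n m : ℕ) : Finset (Finset ℕ) :=
  (Finset.Icc 1 (n+m)).powerset.filter fun S => S.card = n

/-- The vertex set of `Λ(n,m)`: all pairs `X(S)` with `X ∈ {A,B,C,D}` and `S` an
`n`-element subset of `{1,…,n+m}`. -/
def VsNM (n m : ℕ) : Finset (Lbl × Finset ℕ) :=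
  ({Lbl.A, Lbl.B, Lbl.C, Lbl.D} : Finset Lbl) ×ˢ nsubs n m

/-- The set `{k-1, k}`, interpreted as `{1}` when `k = 1` and as `{N}` when `k = N+1`. -/
def pairset (N k : ℕ) : Finset ℕ :=
  if k = 1 then {1} else if k = N + 1 then {N} else {k - 1, k}

/-- The description of the edges of `Λ(n,m)`: an edge of color `k` joins
(E1) `A(S)` and `B(S)` (or `C(S)` and `D(S)`) when `{k-1,k} ∩ S = ∅`;
(E2) `A(S)` and `C(S)` (or `B(S)` and `D(S)`) when `{k-1,k} ⊆ S`;
(E3) `X(S)` and `X((S \ {k}) ∪ {k-1})` when `2 ≤ k ≤ n+m`, `k ∈ S`, `k-1 ∉ S`. -/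
def EdgeSpec (n m : ℕ) (q : (Lbl × Finset ℕ) × (Lbl × Finset ℕ) × ℕ) : Prop :=
  ((q.1.2 = q.2.1.2 ∧ pairset (n+m) q.2.2 ∩ q.1.2 = ∅ ∧
      ((q.1.1 = Lbl.A ∧ q.2.1.1 = Lbl.B) ∨ (q.1.1 = Lbl.C ∧ q.2.1.1 = Lbl.D))) ∨
   (q.1.2 = q.2.1.2 ∧ pairset (n+m) q.2.2 ⊆ q.1.2 ∧
      ((q.1.1 = Lbl.A ∧ q.2.1.1 = Lbl.C) ∨ (q.1.1 = Lbl.B ∧ q.2.1.1 = Lbl.D))) ∨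
   (q.1.1 = q.2.1.1 ∧ 2 ≤ q.2.2 ∧ q.2.2 ≤ n+m ∧ q.2.2 ∈ q.1.2 ∧ q.2.2 - 1 ∉ q.1.2 ∧
      q.2.1.2 = insert (q.2.2 - 1) (q.1.2.erase q.2.2)))

/-- The `(n+m+1)`-colored multigraph `Λ(n,m)` (with colors `{1,…,n+m+1}`). -/
def LamNM (n m : ℕ) : MG (Lbl × Finset ℕ) where
  Vs := VsNM n m
  Es := (VsNM n m ×ˢ VsNM n m ×ˢ Finset.Icc 1 (n+m+1)).filter (EdgeSpec n m)

/-- `S ∈ X_j`, i.e. `S ⊆ {j+1,…,n+m}` and `#S = n+1-j`, for `1 ≤ j ≤ n`. -/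
def inXj (n m j : ℕ) (S : Finset ℕ) : Prop :=
  1 ≤ j ∧ j ≤ n ∧ S ⊆ Finset.Icc (j+1) (n+m) ∧ S.card = n + 1 - j

/-- `S ∈ X = X_1 ∪ ⋯ ∪ X_n`. -/
def inX (n m : ℕ) (S : Finset ℕ) : Prop := ∃ j, inXj n m j S

/-- `X` as a finite set of finsets. -/
def Xset (n m : ℕ) : Finset (Finset ℕ) :=
  (Finset.Icc 1 (n+m)).powerset.filter (inX n m)

/-- For `S = {i_1 < ⋯ < i_{n+1-j}} ∈ X_j` (where `j = n+1-#S`) and `S' = S \ {i_1}`,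
the pair `D(S) = D_j(S)` of vertices of `Λ(n,m)`:
`{A([j-1] ∪ S), A([j] ∪ S')}` if `j` is odd and `i_1 = j+1`;
`{A([j-1] ∪ S), B([i_1-j-1, i_1-2] ∪ S')}` if `j` is odd and `i_1 > j+1`;
`{B([i_1-j, i_1-2] ∪ S), B([i_1-j, i_1-1] ∪ S')}` if `j` is even. -/
def DS (n m : ℕ) (S : Finset ℕ) : (Lbl × Finset ℕ) × (Lbl × Finset ℕ) :=
  let j := n + 1 - S.card
  let i1 := if h : S.Nonempty then S.min' h else 0
  let S' := S.erase i1
  if Odd j then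
    if i1 = j + 1 then
      ((Lbl.A, Finset.Icc 1 (j-1) ∪ S), (Lbl.A, Finset.Icc 1 j ∪ S'))
    else
      ((Lbl.A, Finset.Icc 1 (j-1) ∪ S), (Lbl.B, Finset.Icc (i1-j-1) (i1-2) ∪ S'))
  else
    ((Lbl.B, Finset.Icc (i1-j) (i1-2) ∪ S), (Lbl.B, Finset.Icc (i1-j) (i1-1) ∪ S'))

/-- The binary encoding `∑_{i ∈ S} 2^i` of a finite set of naturals. -/
def binval (S : Finset ℕ) : ℕ := ∑ i ∈ S, 2 ^ i

/-- A numerical key linearizing the total order `≻` on `X`: for `S, T ∈ X`,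
`D(T) ≻ D(S)` (i.e. `D(T)` comes earlier) if and only if `key T < key S`.
(The primary comparison is by `j = n+1-#S` ascending; for equal `j`, `T >_rlex S`
holds exactly when the binary encoding of `T` is smaller than that of `S`.) -/
def key (n m : ℕ) (S : Finset ℕ) : ℕ :=
  (n + 1 - S.card) * 2 ^ (n + m + 2) + binval S

/-- `SX n m k` is the set `S ∈ X` whose pair `D(S)` is the `k`-th element `D_k` in the
total order `D_1 ≻ D_2 ≻ ⋯` (obtained by sorting the keys and decoding the `k`-th one). -/
def SX (n m k : ℕ) : Finset ℕ :=
  let kk := (((Xset n m).image (key n m)).sort (· ≤ ·)).getD (k-1) 0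
  (Finset.Icc 1 (n+m)).filter fun i => Nat.testBit (kk % 2 ^ (n + m + 2)) i

/-- The sequence of multigraphs `Λ^(1), Λ^(2), …` : `Lam0 n m (k-1) = Λ^(k)`, where
`Λ^(1) = Λ(n,m)` and `Λ^(k+1) = del_{D_k} Λ^(k)`. -/
def Lam0 (n m : ℕ) : ℕ → MG (Lbl × Finset ℕ)
  | 0 => LamNM n m
  | k + 1 => MG.del (Finset.Icc 1 (n+m+1)) (Lam0 n m k)
      (DS n m (SX n m (k+1))).1 (DS n m (SX n m (k+1))).2

/-- The number of elements `T ∈ X` with `D(T) ≻ D(S)`, i.e. cancelled before `D(S)`;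
if `D(S) = D_k` then `posIdx n m S = k - 1`. -/
def posIdx (n m : ℕ) (S : Finset ℕ) : ℕ :=
  ((Xset n m).filter fun T => key n m T < key n m S).card

/-- `Λ(S) = Λ^(k)` where `D_k = D(S)`: the multigraph to which the cancelling of the
pair `D(S)` is applied. -/
def LamS (n m : ℕ) (S : Finset ℕ) : MG (Lbl × Finset ℕ) := Lam0 n m (posIdx n m S)

/-- `Λ'(S) = Λ^(k+1) = del_{D(S)} Λ(S)` where `D_k = D(S)`. -/
def LamS' (n m : ℕ) (S : Finset ℕ) : MG (Lbl × Finset ℕ) := Lam0 n m (posIdx n m S + 1)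

/-- Two vertices `u`, `v` are directly connected on `G` by the colors `H` if for every
`i ∈ H` there is an edge of `G` of color `i` whose vertex set is `{u, v}`. -/
def dirConn {V : Type} (G : MG V) (u v : V) (H : Finset ℕ) : Prop :=
  ∀ i ∈ H, ∃ e ∈ G.Es, e.2.2 = i ∧ MG.joins e u v

/-- `color(S) = {l ∈ S : l-1 ∉ S}`. -/
def colorOf (S : Finset ℕ) : Finset ℕ := S.filter fun l => l - 1 ∉ S

/-! ### Auxiliary lemmas -/

section Aux

lemma binval_lt_of (T : Finset ℕ) : ∀ k, (∀ i ∈ T, i < k) → binval T < 2 ^ k := by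
  induction T using Finset.induction_on_max with
  | empty => intro k _; simp [binval]
  | insert a s ha ih =>
    intro k hk
    have hns : a ∉ s := fun h => lt_irrefl a (ha a h)
    rw [binval, Finset.sum_insert hns]
    have h1 : binval s < 2 ^ a := ih a ha
    have h2 : a < k := hk a (Finset.mem_insert_self _ _)
    have h3 : 2 ^ (a + 1) ≤ 2 ^ k := Nat.pow_le_pow_right (by norm_num) h2
    have h4 : (2:ℕ) ^ (a+1) = 2 ^ a + 2 ^ a := by ring
    change 2 ^ a + binval s < 2 ^ k
    omega

lemma testBit_binval (T : Finset ℕ) : ∀ i, (binval T).testBit i = true ↔ i ∈ T := by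
  induction T using Finset.induction_on_max with
  | empty => intro i; simp [binval]
  | insert a s ha ih =>
    intro i
    have hns : a ∉ s := fun h => lt_irrefl a (ha a h)
    have hlt : binval s < 2 ^ a := binval_lt_of s a ha
    rw [binval, Finset.sum_insert hns]
    change (2 ^ a + binval s).testBit i = true ↔ _
    rcases lt_trichotomy i a with h | rfl | h
    · have hdiv : (2 ^ a + binval s) / 2 ^ i = 2 ^ (a - i) + binval s / 2 ^ i := by
        have he : (2:ℕ) ^ a = 2 ^ i * 2 ^ (a - i) := by
          rw [← pow_add]; congr 1; omega
        rw [he, Nat.mul_add_div (Nat.two_pow_pos i)]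
      have heq : (2 ^ a + binval s).testBit i = (binval s).testBit i := by
        rw [Nat.testBit_eq_decide_div_mod_eq, Nat.testBit_eq_decide_div_mod_eq, hdiv]
        have : (2:ℕ) ^ (a - i) = 2 * 2 ^ (a - i - 1) := by
          rw [← pow_succ']; congr 1; omega
        rw [this, Nat.mul_add_mod]
      rw [heq, ih i, Finset.mem_insert]
      constructor
      · exact fun h' => Or.inr h'
      · rintro (rfl | h'); · omega
        · exact h'
    · have hdiv : (2 ^ i + binval s) / 2 ^ i = 1 := by
        rw [Nat.add_div_left _ (Nat.two_pow_pos i),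
          Nat.div_eq_of_lt hlt]
      rw [Nat.testBit_eq_decide_div_mod_eq, hdiv]
      simp
    · have hbig : 2 ^ a + binval s < 2 ^ i := by
        have : 2 ^ (a + 1) ≤ 2 ^ i := Nat.pow_le_pow_right (by norm_num) h
        have h4 : (2:ℕ) ^ (a+1) = 2 ^ a + 2 ^ a := by ring
        omega
      rw [Nat.testBit_eq_false_of_lt hbig]
      simp only [Bool.false_eq_true, false_iff, Finset.mem_insert]
      rintro (rfl | h')
      · omega
      · exact absurd (ha i h') (by omega)

lemma binval_injective {T T' : Finset ℕ} (h : binval T = binval T') : T = T' := by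
  ext i
  rw [← testBit_binval T i, ← testBit_binval T' i, h]

lemma binval_lt_B {n m : ℕ} {T : Finset ℕ} (hT : T ⊆ Finset.Icc 1 (n+m)) :
    binval T < 2 ^ (n + m + 2) := by
  have h1 : binval T < 2 ^ (n + m + 1) :=
    binval_lt_of T (n + m + 1) (fun i hi => by
      have := Finset.mem_Icc.mp (hT hi); omega)
  have h2 : (2:ℕ) ^ (n + m + 1) ≤ 2 ^ (n + m + 2) :=
    Nat.pow_le_pow_right (by norm_num) (by omega)
  omega

lemma key_mod {n m : ℕ} {T : Finset ℕ} (hT : T ⊆ Finset.Icc 1 (n+m)) :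
    key n m T % 2 ^ (n + m + 2) = binval T := by
  rw [key, mul_comm, Nat.mul_add_mod, Nat.mod_eq_of_lt (binval_lt_B hT)]

lemma key_injOn {n m : ℕ} {T T' : Finset ℕ} (hT : T ⊆ Finset.Icc 1 (n+m))
    (hT' : T' ⊆ Finset.Icc 1 (n+m)) (h : key n m T = key n m T') : T = T' := by
  apply binval_injective
  rw [← key_mod hT, ← key_mod hT', h]

lemma key_lt_cases {n m : ℕ} {S T : Finset ℕ} (hS : S ⊆ Finset.Icc 1 (n+m))
    (hT : T ⊆ Finset.Icc 1 (n+m)) (h : key n m T < key n m S) :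
    n + 1 - T.card < n + 1 - S.card ∨
      (n + 1 - T.card = n + 1 - S.card ∧ binval T < binval S) := by
  have hbT : binval T < 2 ^ (n + m + 2) := binval_lt_B hT
  have hbS : binval S < 2 ^ (n + m + 2) := binval_lt_B hS
  rw [key, key] at h
  set B := 2 ^ (n + m + 2) with hB
  set jT := n + 1 - T.card with hjT
  set jS := n + 1 - S.card with hjS
  have hle : jT ≤ jS := by
    by_contra hc
    push_neg at hc
    have h5 : (jS + 1) * B ≤ jT * B := Nat.mul_le_mul_right B (by omega)
    rw [add_mul, one_mul] at h5
    omega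
  rcases Nat.lt_or_ge jT jS with hlt | hge
  · exact Or.inl hlt
  · have heq : jT = jS := le_antisymm hle hge
    right
    refine ⟨heq, ?_⟩
    rw [heq] at h
    omega

/-- In the sorted list of a finset, entries at index below the count of elements `< c`
are themselves `< c`. -/
lemma sorted_getD_lt {F : Finset ℕ} {c : ℕ} {i : ℕ}
    (hi : i < (F.filter (· < c)).card) :
    (F.sort (· ≤ ·)).getD i 0 < c ∧ (F.sort (· ≤ ·)).getD i 0 ∈ F := by
  classical
  set L := F.sort (· ≤ ·) with hL
  have hlen : L.length = F.card := Finset.length_sort _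
  have hilen : i < L.length := by
    have := Finset.card_le_card (Finset.filter_subset (· < c) F)
    omega
  rw [List.getD_eq_getElem L 0 hilen]
  refine ⟨?_, (Finset.mem_sort _).mp (List.getElem_mem hilen)⟩
  by_contra hge
  push_neg at hge
  have key : ∀ x ∈ F.filter (· < c), List.idxOf x L < i := by
    intro x hx
    rcases Finset.mem_filter.mp hx with ⟨hxF, hxc⟩
    have hmem : x ∈ L := (Finset.mem_sort _).mpr hxF
    have hidx : List.idxOf x L < L.length := List.idxOf_lt_length_iff.mpr hmem
    by_contra hni
    push_neg at hni
    have hrel : L.get ⟨i, hilen⟩ ≤ L.get ⟨List.idxOf x L, hidx⟩ := by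
      have hs : L.Pairwise (· ≤ ·) := Finset.pairwise_sort _ _
      exact hs.rel_get_of_le (by exact hni)
    simp only [List.get_eq_getElem] at hrel
    rw [List.getElem_idxOf hidx] at hrel
    omega
  have hcard : (F.filter (· < c)).card ≤ (Finset.range i).card := by
    apply Finset.card_le_card_of_injOn (fun x => List.idxOf x L)
    · intro x hx; exact Finset.mem_range.mpr (key x hx)
    · intro x hx y hy hxy
      have hx' : x ∈ L := (Finset.mem_sort _).mpr (Finset.mem_filter.mp hx).1
      have hy' : y ∈ L := (Finset.mem_sort _).mpr (Finset.mem_filter.mp hy).1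
      have hix : List.idxOf x L < L.length := List.idxOf_lt_length_iff.mpr hx'
      have hiy : List.idxOf y L < L.length := List.idxOf_lt_length_iff.mpr hy'
      have : L[List.idxOf x L] = L[List.idxOf y L] := by
        congr 1
      rw [List.getElem_idxOf hix, List.getElem_idxOf hiy] at this
      exact this
  rw [Finset.card_range] at hcard
  omega

lemma Xset_subset {n m : ℕ} {T : Finset ℕ} (hT : T ∈ Xset n m) :
    T ⊆ Finset.Icc 1 (n+m) := by
  rw [Xset, Finset.mem_filter, Finset.mem_powerset] at hT
  exact hT.1

lemma SX_spec {n m : ℕ} {S : Finset ℕ} (hSX : S ∈ Xset n m) {l : ℕ} (hl : 1 ≤ l)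
    (hl2 : l ≤ posIdx n m S) :
    SX n m l ∈ Xset n m ∧ key n m (SX n m l) < key n m S := by
  classical
  set F := (Xset n m).image (key n m) with hF
  have hinj : Set.InjOn (key n m) (Xset n m) := fun a ha b hb h =>
    key_injOn (Xset_subset ha) (Xset_subset hb) h
  have hcnt : (F.filter (· < key n m S)).card = posIdx n m S := by
    rw [hF, Finset.filter_image, Finset.card_image_of_injOn
      (hinj.mono (Finset.filter_subset _ _))]
    rfl
  have hi : l - 1 < (F.filter (· < key n m S)).card := by omega
  obtain ⟨hlt, hmemF⟩ := sorted_getD_lt hi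
  rw [hF, Finset.mem_image] at hmemF
  obtain ⟨T, hTX, hTk⟩ := hmemF
  have hklt : key n m T < key n m S := by rw [hTk, ← hF]; exact hlt
  have hdec : SX n m l = T := by
    rw [SX]
    show (Finset.Icc 1 (n+m)).filter
      (fun i => Nat.testBit ((((Xset n m).image (key n m)).sort (· ≤ ·)).getD (l-1) 0
        % 2 ^ (n+m+2)) i) = T
    rw [← hTk, key_mod (Xset_subset hTX)]
    ext x
    simp only [Finset.mem_filter, Finset.mem_Icc]
    constructor
    · rintro ⟨h1, h2⟩
      exact (testBit_binval T x).mp h2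
    · intro hx
      have hx' := Finset.mem_Icc.mp (Xset_subset hTX hx)
      exact ⟨hx', (testBit_binval T x).mpr hx⟩
  rw [hdec]
  exact ⟨hTX, hklt⟩

lemma mem_Lam0 {n m : ℕ} (v : Lbl × Finset ℕ) (hv : v ∈ VsNM n m) :
    ∀ k, (∀ l, 1 ≤ l → l ≤ k →
      v ≠ (DS n m (SX n m l)).1 ∧ v ≠ (DS n m (SX n m l)).2) →
    v ∈ (Lam0 n m k).Vs := by
  intro k
  induction k with
  | zero => intro _; exact hv
  | succ k ih =>
    intro h
    have h1 := h (k+1) (by omega) le_rfl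
    have h2 : v ∈ (Lam0 n m k).Vs := ih (fun l hl1 hl2 => h l hl1 (by omega))
    show v ∈ (MG.del _ _ _ _).Vs
    rw [MG.del]
    simp only [Finset.mem_sdiff, Finset.mem_insert, Finset.mem_singleton]
    exact ⟨h2, by tauto⟩

lemma binval_insert {a : ℕ} {P : Finset ℕ} (h : a ∉ P) :
    binval (insert a P) = 2 ^ a + binval P := Finset.sum_insert h

lemma DS_eq {n m : ℕ} {T : Finset ℕ} (hne : T.Nonempty) :
    DS n m T =
      if Odd (n + 1 - T.card) then
        if T.min' hne = (n + 1 - T.card) + 1 then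
          ((Lbl.A, Finset.Icc 1 ((n + 1 - T.card)-1) ∪ T),
           (Lbl.A, Finset.Icc 1 (n + 1 - T.card) ∪ T.erase (T.min' hne)))
        else
          ((Lbl.A, Finset.Icc 1 ((n + 1 - T.card)-1) ∪ T),
           (Lbl.B, Finset.Icc (T.min' hne - (n + 1 - T.card) - 1) (T.min' hne - 2) ∪
             T.erase (T.min' hne)))
      else
        ((Lbl.B, Finset.Icc (T.min' hne - (n + 1 - T.card)) (T.min' hne - 2) ∪ T),
         (Lbl.B, Finset.Icc (T.min' hne - (n + 1 - T.card)) (T.min' hne - 1) ∪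
           T.erase (T.min' hne))) := by
  rw [DS]
  simp only [dif_pos hne]

lemma HA {a b : ℕ} {P Q : Finset ℕ} (hP : ∀ x ∈ P, a+2 ≤ x) (hQ : ∀ x ∈ Q, b+2 ≤ x)
    (h : Finset.Icc 1 a ∪ P = Finset.Icc 1 b ∪ Q) : a = b ∧ P = Q := by
  have hab : ¬ a < b := by
    intro hlt
    have h1 : a+1 ∈ Finset.Icc 1 b ∪ Q :=
      Finset.mem_union_left _ (Finset.mem_Icc.mpr ⟨by omega, by omega⟩)
    rw [← h] at h1
    rcases Finset.mem_union.mp h1 with h2 | h2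
    · have := Finset.mem_Icc.mp h2; omega
    · have := hP _ h2; omega
  have hba : ¬ b < a := by
    intro hlt
    have h1 : b+1 ∈ Finset.Icc 1 a ∪ P :=
      Finset.mem_union_left _ (Finset.mem_Icc.mpr ⟨by omega, by omega⟩)
    rw [h] at h1
    rcases Finset.mem_union.mp h1 with h2 | h2
    · have := Finset.mem_Icc.mp h2; omega
    · have := hQ _ h2; omega
  have hab' : a = b := by omega
  subst hab'
  refine ⟨rfl, ?_⟩
  ext x
  constructor
  · intro hx
    have h1 := Finset.mem_union_right (Finset.Icc 1 a) hx
    rw [h] at h1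
    rcases Finset.mem_union.mp h1 with h2 | h2
    · have := Finset.mem_Icc.mp h2; have := hP _ hx; omega
    · exact h2
  · intro hx
    have h1 := Finset.mem_union_right (Finset.Icc 1 a) hx
    rw [← h] at h1
    rcases Finset.mem_union.mp h1 with h2 | h2
    · have := Finset.mem_Icc.mp h2; have := hQ _ hx; omega
    · exact h2

lemma HB {a b c d : ℕ} {P Q : Finset ℕ} (hab : a ≤ b) (hcd : c ≤ d)
    (hP : ∀ x ∈ P, b+1 ≤ x) (hbP : b+1 ∉ P) (hQ : ∀ x ∈ Q, d+1 ≤ x) (hdQ : d+1 ∉ Q)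
    (h : Finset.Icc a b ∪ P = Finset.Icc c d ∪ Q) : a = c ∧ b = d ∧ P = Q := by
  have hac : c ≤ a := by
    have h1 : a ∈ Finset.Icc a b ∪ P :=
      Finset.mem_union_left _ (Finset.mem_Icc.mpr ⟨le_rfl, hab⟩)
    rw [h] at h1
    rcases Finset.mem_union.mp h1 with h2 | h2
    · exact (Finset.mem_Icc.mp h2).1
    · have := hQ _ h2; omega
  have hca : a ≤ c := by
    have h1 : c ∈ Finset.Icc c d ∪ Q :=
      Finset.mem_union_left _ (Finset.mem_Icc.mpr ⟨le_rfl, hcd⟩)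
    rw [← h] at h1
    rcases Finset.mem_union.mp h1 with h2 | h2
    · exact (Finset.mem_Icc.mp h2).1
    · have := hP _ h2; omega
  have haceq : a = c := le_antisymm hca hac
  have hbd : ¬ b < d := by
    intro hlt
    have h1 : b+1 ∈ Finset.Icc c d ∪ Q :=
      Finset.mem_union_left _ (Finset.mem_Icc.mpr ⟨by omega, by omega⟩)
    rw [← h] at h1
    rcases Finset.mem_union.mp h1 with h2 | h2
    · have := Finset.mem_Icc.mp h2; omega
    · exact hbP h2
  have hdb : ¬ d < b := by
    intro hlt
    have h1 : d+1 ∈ Finset.Icc a b ∪ P :=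
      Finset.mem_union_left _ (Finset.mem_Icc.mpr ⟨by omega, by omega⟩)
    rw [h] at h1
    rcases Finset.mem_union.mp h1 with h2 | h2
    · have := Finset.mem_Icc.mp h2; omega
    · exact hdQ h2
  have hbdeq : b = d := by omega
  subst haceq; subst hbdeq
  refine ⟨rfl, rfl, ?_⟩
  ext x
  constructor
  · intro hx
    have h1 := Finset.mem_union_right (Finset.Icc a b) hx
    rw [h] at h1
    rcases Finset.mem_union.mp h1 with h2 | h2
    · have := Finset.mem_Icc.mp h2; have := hP _ hx; omega
    · exact h2
  · intro hx
    have h1 := Finset.mem_union_right (Finset.Icc a b) hx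
    rw [← h] at h1
    rcases Finset.mem_union.mp h1 with h2 | h2
    · have := Finset.mem_Icc.mp h2; have := hQ _ hx; omega
    · exact h2

lemma Xset_struct {n m : ℕ} {T : Finset ℕ} (hT : T ∈ Xset n m) :
    ∃ j', 1 ≤ j' ∧ j' ≤ n ∧ T ⊆ Finset.Icc (j'+1) (n+m) ∧ T.card = n+1-j' ∧
      j' = n+1-T.card := by
  rw [Xset, Finset.mem_filter] at hT
  obtain ⟨-, j', h1, h2, h3, h4⟩ := hT
  exact ⟨j', h1, h2, h3, h4, by omega⟩

lemma core_neq {n m j : ℕ} {S : Finset ℕ} (hS : inXj n m j S)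
    {i1 : ℕ} (hi1 : i1 ∈ S) (hmin : ∀ a ∈ S, i1 ≤ a)
    {T : Finset ℕ} (hT : T ∈ Xset n m) (hkey : key n m T < key n m S)
    (v : Lbl × Finset ℕ)
    (hv : (Odd j ∧ v = (Lbl.B, Finset.Icc (i1-j) (i1-1) ∪ S.erase i1)) ∨
          (v = (Lbl.B, Finset.Icc (i1-j+1) i1 ∪ S.erase i1)) ∨
          (Odd j ∧ i1+1 ∉ S ∧
            v = (Lbl.A, Finset.Icc 1 (j-1) ∪ insert (i1+1) (S.erase i1))) ∨
          (Even j ∧ v = (Lbl.A, Finset.Icc 1 j ∪ S.erase i1))) :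
    v ≠ (DS n m T).1 ∧ v ≠ (DS n m T).2 := by
  obtain ⟨hj1, hjn, hSsub, hScard⟩ := hS
  obtain ⟨j', hj'1, hj'n, hTsub, hTcard, hj'eq⟩ := Xset_struct hT
  have hi1b : j+1 ≤ i1 ∧ i1 ≤ n+m := Finset.mem_Icc.mp (hSsub hi1)
  have hSsub1 : S ⊆ Finset.Icc 1 (n+m) := fun x hx => by
    have := Finset.mem_Icc.mp (hSsub hx); exact Finset.mem_Icc.mpr ⟨by omega, this.2⟩
  have hS' : ∀ x ∈ S.erase i1, i1+1 ≤ x := by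
    intro x hx
    have h1 := Finset.mem_erase.mp hx
    have := hmin x h1.2
    omega
  have hi1S' : i1 ∉ S.erase i1 := Finset.notMem_erase _ _
  have hSins : insert i1 (S.erase i1) = S := Finset.insert_erase hi1
  have hbS : binval S = 2 ^ i1 + binval (S.erase i1) := by
    nth_rewrite 1 [← hSins]
    rw [binval_insert hi1S']
  have hTne : T.Nonempty := Finset.card_pos.mp (by omega)
  set t1 := T.min' hTne with ht1def
  have ht1T : t1 ∈ T := T.min'_mem hTne
  have htmin : ∀ x ∈ T, t1 ≤ x := fun x hx => T.min'_le x hx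
  have ht1b : j'+1 ≤ t1 ∧ t1 ≤ n+m := Finset.mem_Icc.mp (hTsub ht1T)
  have hT' : ∀ x ∈ T.erase t1, t1+1 ≤ x := by
    intro x hx
    have h1 := Finset.mem_erase.mp hx
    have := htmin x h1.2
    omega
  have ht1T' : t1 ∉ T.erase t1 := Finset.notMem_erase _ _
  have hTins : insert t1 (T.erase t1) = T := Finset.insert_erase ht1T
  have hjj : j' < j ∨ (j' = j ∧ binval T < binval S) := by
    have hc := key_lt_cases hSsub1 (Xset_subset hT) hkey
    have hjS : n + 1 - S.card = j := by omega
    have hjT : n + 1 - T.card = j' := by omega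
    rw [hjS, hjT] at hc
    exact hc
  have hbcontra : ∀ s : ℕ, i1 < s → s ∉ S.erase i1 →
      T = insert s (S.erase i1) → j' = j → False := by
    intro s hs hsS' hTeq hj'j
    rcases hjj with h | ⟨-, h⟩
    · omega
    · rw [hTeq, binval_insert hsS', hbS] at h
      have h6 : (2:ℕ) ^ i1 < 2 ^ s := Nat.pow_lt_pow_right (by norm_num) (by omega)
      omega
  -- facts for HB on the S-side
  have hPT1 : ∀ x ∈ S.erase i1, (i1-1)+1 ≤ x := fun x hx => by have := hS' x hx; omega
  have hbPT1 : (i1-1)+1 ∉ S.erase i1 := by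
    have he : i1-1+1 = i1 := by omega
    rw [he]; exact hi1S'
  have hPT2 : ∀ x ∈ S.erase i1, i1+1 ≤ x := hS'
  rcases Nat.even_or_odd j' with hevenj' | hoddj'
  · -- j' even : DS T = (Bb, Bc)
    have hnotodd : ¬ Odd (n + 1 - T.card) := by
      rw [Nat.not_odd_iff_even, ← hj'eq]; exact hevenj'
    have hj'2 : 2 ≤ j' := by
      rcases hevenj' with ⟨r, hr⟩; omega
    have hd1 : (DS n m T).1 = (Lbl.B, Finset.Icc (t1-j') (t1-2) ∪ T) := by
      rw [DS_eq hTne, if_neg hnotodd, ← ht1def, ← hj'eq]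
    have hd2 : (DS n m T).2 = (Lbl.B, Finset.Icc (t1-j') (t1-1) ∪ T.erase t1) := by
      rw [DS_eq hTne, if_neg hnotodd, ← ht1def, ← hj'eq]
    constructor
    · -- v ≠ Bb
      rw [hd1]
      intro hveq
      rcases hv with ⟨hjodd, rfl⟩ | rfl | ⟨hjodd, hni, rfl⟩ | ⟨hjeven, rfl⟩
      · -- T1 vs Bb
        injection hveq with h1 h2
        obtain ⟨e1, e2, -⟩ := HB (a := i1-j) (b := i1-1) (c := t1-j') (d := t1-2)
          (by omega) (by omega) hPT1 hbPT1
          (fun x hx => by have := htmin x hx; omega)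
          (fun hc => by have := htmin _ hc; omega) h2
        rcases hjj with h | ⟨h, -⟩ <;> omega
      · -- T2 vs Bb
        injection hveq with h1 h2
        by_cases hc : i1+1 ∈ S.erase i1
        · -- asymmetric argument
          have hmineq : t1-j' = i1-j+1 := by
            have le1 : t1-j' ∈ Finset.Icc (t1-j') (t1-2) ∪ T :=
              Finset.mem_union_left _ (Finset.mem_Icc.mpr ⟨le_rfl, by omega⟩)
            rw [← h2] at le1
            have le1' : i1-j+1 ≤ t1-j' := by
              rcases Finset.mem_union.mp le1 with h3 | h3
              · exact (Finset.mem_Icc.mp h3).1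
              · have := hS' _ h3; omega
            have le2 : i1-j+1 ∈ Finset.Icc (i1-j+1) i1 ∪ S.erase i1 :=
              Finset.mem_union_left _ (Finset.mem_Icc.mpr ⟨le_rfl, by omega⟩)
            rw [h2] at le2
            have le2' : t1-j' ≤ i1-j+1 := by
              rcases Finset.mem_union.mp le2 with h3 | h3
              · exact (Finset.mem_Icc.mp h3).1
              · have := htmin _ h3; omega
            omega
          have hgap : t1-1 ∉ Finset.Icc (t1-j') (t1-2) ∪ T := by
            intro hmem
            rcases Finset.mem_union.mp hmem with h3 | h3
            · have := Finset.mem_Icc.mp h3; omega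
            · have := htmin _ h3; omega
          rw [← h2] at hgap
          have hg1 : t1-1 ∉ Finset.Icc (i1-j+1) i1 :=
            fun hc' => hgap (Finset.mem_union_left _ hc')
          have hg2 : t1-1 ∉ S.erase i1 :=
            fun hc' => hgap (Finset.mem_union_right _ hc')
          have hgt : i1 < t1-1 := by
            have : ¬ (i1-j+1 ≤ t1-1 ∧ t1-1 ≤ i1) := fun hc' =>
              hg1 (Finset.mem_Icc.mpr hc')
            omega
          have hne2 : t1-1 ≠ i1+1 := fun hc' => hg2 (hc' ▸ hc)
          rcases hjj with h | ⟨h, -⟩ <;> omega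
        · obtain ⟨e1, e2, -⟩ := HB (a := i1-j+1) (b := i1) (c := t1-j') (d := t1-2)
            (by omega) (by omega) hPT2 hc
            (fun x hx => by have := htmin x hx; omega)
            (fun hc' => by have := htmin _ hc'; omega) h2
          rcases hjj with h | ⟨h, -⟩ <;> omega
      · injection hveq with h1 h2; exact Lbl.noConfusion h1
      · injection hveq with h1 h2; exact Lbl.noConfusion h1
    · -- v ≠ Bc
      rw [hd2]
      intro hveq
      rcases hv with ⟨hjodd, rfl⟩ | rfl | ⟨hjodd, hni, rfl⟩ | ⟨hjeven, rfl⟩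
      · -- T1 vs Bc
        injection hveq with h1 h2
        obtain ⟨e1, e2, -⟩ := HB (a := i1-j) (b := i1-1) (c := t1-j') (d := t1-1)
          (by omega) (by omega) hPT1 hbPT1
          (fun x hx => by have := hT' x hx; omega)
          (fun hc => by have := hT' _ hc; omega) h2
        rw [Nat.odd_iff] at hjodd
        rcases hevenj' with ⟨r, hr⟩
        omega
      · -- T2 vs Bc
        injection hveq with h1 h2
        by_cases hc : i1+1 ∈ S.erase i1
        · have hmineq : t1-j' = i1-j+1 := by
            have le1 : t1-j' ∈ Finset.Icc (t1-j') (t1-1) ∪ T.erase t1 :=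
              Finset.mem_union_left _ (Finset.mem_Icc.mpr ⟨le_rfl, by omega⟩)
            rw [← h2] at le1
            have le1' : i1-j+1 ≤ t1-j' := by
              rcases Finset.mem_union.mp le1 with h3 | h3
              · exact (Finset.mem_Icc.mp h3).1
              · have := hS' _ h3; omega
            have le2 : i1-j+1 ∈ Finset.Icc (i1-j+1) i1 ∪ S.erase i1 :=
              Finset.mem_union_left _ (Finset.mem_Icc.mpr ⟨le_rfl, by omega⟩)
            rw [h2] at le2
            have le2' : t1-j' ≤ i1-j+1 := by
              rcases Finset.mem_union.mp le2 with h3 | h3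
              · exact (Finset.mem_Icc.mp h3).1
              · have := hT' _ h3; omega
            omega
          have hgap : t1 ∉ Finset.Icc (t1-j') (t1-1) ∪ T.erase t1 := by
            intro hmem
            rcases Finset.mem_union.mp hmem with h3 | h3
            · have := Finset.mem_Icc.mp h3; omega
            · have := hT' _ h3; omega
          rw [← h2] at hgap
          have hg1 : t1 ∉ Finset.Icc (i1-j+1) i1 :=
            fun hc' => hgap (Finset.mem_union_left _ hc')
          have hg2 : t1 ∉ S.erase i1 :=
            fun hc' => hgap (Finset.mem_union_right _ hc')
          have hgt : i1 < t1 := by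
            have : ¬ (i1-j+1 ≤ t1 ∧ t1 ≤ i1) := fun hc' =>
              hg1 (Finset.mem_Icc.mpr hc')
            omega
          have hne2 : t1 ≠ i1+1 := fun hc' => hg2 (hc' ▸ hc)
          rcases hjj with h | ⟨h, -⟩ <;> omega
        · obtain ⟨e1, e2, e3⟩ := HB (a := i1-j+1) (b := i1) (c := t1-j') (d := t1-1)
            (by omega) (by omega) hPT2 hc
            (fun x hx => by have := hT' x hx; omega)
            (fun hc' => by have := hT' _ hc'; omega) h2
          have ht1i1 : t1 = i1+1 := by omega
          have hj'j : j' = j := by omega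
          exact hbcontra t1 (by omega) (e3 ▸ ht1T')
            (by rw [e3]; exact hTins.symm) hj'j
      · injection hveq with h1 h2; exact Lbl.noConfusion h1
      · injection hveq with h1 h2; exact Lbl.noConfusion h1
  · -- j' odd
    have hoddc : Odd (n + 1 - T.card) := by rw [← hj'eq]; exact hoddj'
    have hAcase : v ≠ (Lbl.A, Finset.Icc 1 (j'-1) ∪ T) := by
      intro hveq
      rcases hv with ⟨hjodd, rfl⟩ | rfl | ⟨hjodd, hni, rfl⟩ | ⟨hjeven, rfl⟩
      · injection hveq with h1 h2; exact Lbl.noConfusion h1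
      · injection hveq with h1 h2; exact Lbl.noConfusion h1
      · -- T3 vs A1
        injection hveq with h1 h2
        obtain ⟨e1, e2⟩ := HA (a := j-1) (b := j'-1)
          (fun x hx => by
            rcases Finset.mem_insert.mp hx with rfl | hx'
            · omega
            · have := hS' _ hx'; omega)
          (fun x hx => by have := Finset.mem_Icc.mp (hTsub hx); omega) h2
        have hj'j : j' = j := by omega
        have hni' : i1+1 ∉ S.erase i1 := fun hc =>
          hni (Finset.erase_subset _ _ hc)
        exact hbcontra (i1+1) (by omega) hni' e2.symm hj'j
      · -- T4 vs A1
        injection hveq with h1 h2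
        obtain ⟨e1, -⟩ := HA (a := j) (b := j'-1)
          (fun x hx => by have := hS' _ hx; omega)
          (fun x hx => by have := Finset.mem_Icc.mp (hTsub hx); omega) h2
        rcases hjj with h | ⟨h, -⟩ <;> omega
    by_cases ht1c : t1 = j'+1
    · -- DS T = (A1, A2)
      have hd1 : (DS n m T).1 = (Lbl.A, Finset.Icc 1 (j'-1) ∪ T) := by
        rw [DS_eq hTne, if_pos hoddc, ← ht1def, ← hj'eq, if_pos ht1c]
      have hd2 : (DS n m T).2 = (Lbl.A, Finset.Icc 1 j' ∪ T.erase t1) := by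
        rw [DS_eq hTne, if_pos hoddc, ← ht1def, ← hj'eq, if_pos ht1c]
      refine ⟨hd1 ▸ hAcase, ?_⟩
      rw [hd2]
      intro hveq
      rcases hv with ⟨hjodd, rfl⟩ | rfl | ⟨hjodd, hni, rfl⟩ | ⟨hjeven, rfl⟩
      · injection hveq with h1 h2; exact Lbl.noConfusion h1
      · injection hveq with h1 h2; exact Lbl.noConfusion h1
      · -- T3 vs A2
        injection hveq with h1 h2
        obtain ⟨e1, -⟩ := HA (a := j-1) (b := j')
          (fun x hx => by
            rcases Finset.mem_insert.mp hx with rfl | hx'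
            · omega
            · have := hS' _ hx'; omega)
          (fun x hx => by have := hT' _ hx; omega) h2
        rw [Nat.odd_iff] at hjodd
        rcases hoddj' with ⟨r, hr⟩
        omega
      · -- T4 vs A2
        injection hveq with h1 h2
        obtain ⟨e1, -⟩ := HA (a := j) (b := j')
          (fun x hx => by have := hS' _ hx; omega)
          (fun x hx => by have := hT' _ hx; omega) h2
        rcases hjeven with ⟨r, hr⟩
        rcases hoddj' with ⟨r', hr'⟩
        omega
    · -- DS T = (A1, Ba)
      have ht1gt : j'+2 ≤ t1 := by omega
      have hd1 : (DS n m T).1 = (Lbl.A, Finset.Icc 1 (j'-1) ∪ T) := by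
        rw [DS_eq hTne, if_pos hoddc, ← ht1def, ← hj'eq, if_neg ht1c]
      have hd2 : (DS n m T).2 =
          (Lbl.B, Finset.Icc (t1-j'-1) (t1-2) ∪ T.erase t1) := by
        rw [DS_eq hTne, if_pos hoddc, ← ht1def, ← hj'eq, if_neg ht1c]
      refine ⟨hd1 ▸ hAcase, ?_⟩
      rw [hd2]
      intro hveq
      rcases hv with ⟨hjodd, rfl⟩ | rfl | ⟨hjodd, hni, rfl⟩ | ⟨hjeven, rfl⟩
      · -- T1 vs Ba
        injection hveq with h1 h2
        obtain ⟨e1, e2, e3⟩ := HB (a := i1-j) (b := i1-1) (c := t1-j'-1) (d := t1-2)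
          (by omega) (by omega) hPT1 hbPT1
          (fun x hx => by have := hT' x hx; omega)
          (fun hc => by have := hT' _ hc; omega) h2
        have ht1i1 : t1 = i1+1 := by omega
        have hj'j : j' = j := by omega
        exact hbcontra t1 (by omega) (e3 ▸ ht1T')
          (by rw [e3]; exact hTins.symm) hj'j
      · -- T2 vs Ba
        injection hveq with h1 h2
        by_cases hc : i1+1 ∈ S.erase i1
        · have hmineq : t1-j'-1 = i1-j+1 := by
            have le1 : t1-j'-1 ∈ Finset.Icc (t1-j'-1) (t1-2) ∪ T.erase t1 :=
              Finset.mem_union_left _ (Finset.mem_Icc.mpr ⟨le_rfl, by omega⟩)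
            rw [← h2] at le1
            have le1' : i1-j+1 ≤ t1-j'-1 := by
              rcases Finset.mem_union.mp le1 with h3 | h3
              · exact (Finset.mem_Icc.mp h3).1
              · have := hS' _ h3; omega
            have le2 : i1-j+1 ∈ Finset.Icc (i1-j+1) i1 ∪ S.erase i1 :=
              Finset.mem_union_left _ (Finset.mem_Icc.mpr ⟨le_rfl, by omega⟩)
            rw [h2] at le2
            have le2' : t1-j'-1 ≤ i1-j+1 := by
              rcases Finset.mem_union.mp le2 with h3 | h3
              · exact (Finset.mem_Icc.mp h3).1
              · have := hT' _ h3; omega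
            omega
          have hgap : t1-1 ∉ Finset.Icc (t1-j'-1) (t1-2) ∪ T.erase t1 := by
            intro hmem
            rcases Finset.mem_union.mp hmem with h3 | h3
            · have := Finset.mem_Icc.mp h3; omega
            · have := hT' _ h3; omega
          rw [← h2] at hgap
          have hg1 : t1-1 ∉ Finset.Icc (i1-j+1) i1 :=
            fun hc' => hgap (Finset.mem_union_left _ hc')
          have hg2 : t1-1 ∉ S.erase i1 :=
            fun hc' => hgap (Finset.mem_union_right _ hc')
          have hgt : i1 < t1-1 := by
            have : ¬ (i1-j+1 ≤ t1-1 ∧ t1-1 ≤ i1) := fun hc' =>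
              hg1 (Finset.mem_Icc.mpr hc')
            omega
          have hne2 : t1-1 ≠ i1+1 := fun hc' => hg2 (hc' ▸ hc)
          rcases hjj with h | ⟨h, -⟩ <;> omega
        · obtain ⟨e1, e2, e3⟩ := HB (a := i1-j+1) (b := i1) (c := t1-j'-1) (d := t1-2)
            (by omega) (by omega) hPT2 hc
            (fun x hx => by have := hT' x hx; omega)
            (fun hc' => by have := hT' _ hc'; omega) h2
          have ht1i1 : t1 = i1+2 := by omega
          have hj'j : j' = j := by omega
          exact hbcontra t1 (by omega) (e3 ▸ ht1T')
            (by rw [e3]; exact hTins.symm) hj'j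
      · injection hveq with h1 h2; exact Lbl.noConfusion h1
      · injection hveq with h1 h2; exact Lbl.noConfusion h1

lemma mem_VsNM_of {n m : ℕ} {U : Finset ℕ} (X : Lbl) (hsub : U ⊆ Finset.Icc 1 (n+m))
    (hcard : U.card = n) : (X, U) ∈ VsNM n m := by
  rw [VsNM, Finset.mem_product]
  constructor
  · cases X <;> simp
  · rw [nsubs, Finset.mem_filter, Finset.mem_powerset]; exact ⟨hsub, hcard⟩

lemma S_mem_Xset {n m j : ℕ} {S : Finset ℕ} (hS : inXj n m j S) : S ∈ Xset n m := by
  rw [Xset, Finset.mem_filter, Finset.mem_powerset]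
  refine ⟨?_, j, hS⟩
  intro x hx
  have := Finset.mem_Icc.mp (hS.2.2.1 hx)
  exact Finset.mem_Icc.mpr ⟨by omega, this.2⟩

lemma target_mem_LamS {n m j : ℕ} {S : Finset ℕ} (hS : inXj n m j S)
    (v : Lbl × Finset ℕ) (hvVs : v ∈ VsNM n m)
    (hne : ∀ T ∈ Xset n m, key n m T < key n m S →
      v ≠ (DS n m T).1 ∧ v ≠ (DS n m T).2) :
    v ∈ (LamS n m S).Vs := by
  show v ∈ (Lam0 n m (posIdx n m S)).Vs
  apply mem_Lam0 v hvVs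
  intro l hl1 hl2
  obtain ⟨hTX, hk⟩ := SX_spec (S_mem_Xset hS) hl1 hl2
  exact hne _ hTX hk

end Aux

/-- Let `S = {i_1 < ⋯ < i_{n+1-j}} ∈ X_j` and `S' = S \ {i_1}`.
(i) If `j` is odd then `B([i_1-j, i_1-1] ∪ S')` and `B([i_1-j+1, i_1] ∪ S')` are vertices
of `Λ(S)`; moreover if `i_1+1 ∉ S` and `i_1+1 ≤ n+m` then `A([j-1] ∪ {i_1+1} ∪ S')` is
a vertex of `Λ(S)`.  (ii) If `j` is even then `A([j] ∪ S')` and `B([i_1-j+1, i_1] ∪ S')`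
are vertices of `Λ(S)`. -/
theorem stmt14 (n m : ℕ) (hn : 1 ≤ n) (hm : 1 ≤ m) (j : ℕ) (S : Finset ℕ)
    (hS : inXj n m j S) (i1 : ℕ) (hi1 : i1 ∈ S) (hmin : ∀ a ∈ S, i1 ≤ a) :
    (Odd j →
      ((Lbl.B, Finset.Icc (i1-j) (i1-1) ∪ S.erase i1) ∈ (LamS n m S).Vs ∧
       (Lbl.B, Finset.Icc (i1-j+1) i1 ∪ S.erase i1) ∈ (LamS n m S).Vs ∧
       (i1 + 1 ∉ S → i1 + 1 ≤ n + m →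
         (Lbl.A, Finset.Icc 1 (j-1) ∪ insert (i1+1) (S.erase i1)) ∈ (LamS n m S).Vs))) ∧
    (Even j →
      ((Lbl.A, Finset.Icc 1 j ∪ S.erase i1) ∈ (LamS n m S).Vs ∧
       (Lbl.B, Finset.Icc (i1-j+1) i1 ∪ S.erase i1) ∈ (LamS n m S).Vs)) := by
  obtain ⟨hj1, hjn, hSsub, hScard⟩ := hS
  have hSX : inXj n m j S := ⟨hj1, hjn, hSsub, hScard⟩
  have hi1b : j+1 ≤ i1 ∧ i1 ≤ n+m := Finset.mem_Icc.mp (hSsub hi1)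
  have hS' : ∀ x ∈ S.erase i1, i1+1 ≤ x := by
    intro x hx
    have h1 := Finset.mem_erase.mp hx
    have := hmin x h1.2
    omega
  have hsub' : S.erase i1 ⊆ Finset.Icc 1 (n+m) := by
    intro x hx
    have := Finset.mem_Icc.mp (hSsub (Finset.erase_subset _ _ hx))
    exact Finset.mem_Icc.mpr ⟨by omega, this.2⟩
  have hcS' : (S.erase i1).card = n - j := by
    rw [Finset.card_erase_of_mem hi1, hScard]; omega
  have hdisj : ∀ a b : ℕ, b ≤ i1 → Disjoint (Finset.Icc a b) (S.erase i1) := by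
    intro a b hb
    rw [Finset.disjoint_left]
    intro x hx hx'
    have := Finset.mem_Icc.mp hx
    have := hS' x hx'
    omega
  have hcard1 : ∀ a b : ℕ, b ≤ i1 → (Finset.Icc a b ∪ S.erase i1).card
      = b + 1 - a + (n - j) := by
    intro a b hb
    rw [Finset.card_union_of_disjoint (hdisj a b hb), Nat.card_Icc, hcS']
  refine ⟨fun hjodd => ⟨?_, ?_, fun hni hle => ?_⟩, fun hjeven => ⟨?_, ?_⟩⟩
  · exact target_mem_LamS hSX _
      (mem_VsNM_of Lbl.B
        (Finset.union_subset (fun x hx => by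
          have := Finset.mem_Icc.mp hx
          exact Finset.mem_Icc.mpr ⟨by omega, by omega⟩) hsub')
        (by rw [hcard1 _ _ (by omega)]; omega))
      (fun T hT hk => core_neq hSX hi1 hmin hT hk _ (Or.inl ⟨hjodd, rfl⟩))
  · exact target_mem_LamS hSX _
      (mem_VsNM_of Lbl.B
        (Finset.union_subset (fun x hx => by
          have := Finset.mem_Icc.mp hx
          exact Finset.mem_Icc.mpr ⟨by omega, by omega⟩) hsub')
        (by rw [hcard1 _ _ (by omega)]; omega))
      (fun T hT hk => core_neq hSX hi1 hmin hT hk _ (Or.inr (Or.inl rfl)))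
  · have hni' : i1+1 ∉ S.erase i1 := fun hc => hni (Finset.erase_subset _ _ hc)
    refine target_mem_LamS hSX _ (mem_VsNM_of Lbl.A ?_ ?_)
      (fun T hT hk => core_neq hSX hi1 hmin hT hk _
        (Or.inr (Or.inr (Or.inl ⟨hjodd, hni, rfl⟩))))
    · intro x hx
      rcases Finset.mem_union.mp hx with h2 | h2
      · have := Finset.mem_Icc.mp h2
        exact Finset.mem_Icc.mpr ⟨this.1, by omega⟩
      · rcases Finset.mem_insert.mp h2 with rfl | h3
        · exact Finset.mem_Icc.mpr ⟨by omega, hle⟩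
        · exact hsub' h3
    · rw [Finset.card_union_of_disjoint, Finset.card_insert_of_notMem hni',
        Nat.card_Icc, hcS']
      · omega
      · rw [Finset.disjoint_left]
        intro x hx hx'
        have h4 := Finset.mem_Icc.mp hx
        rcases Finset.mem_insert.mp hx' with rfl | h5
        · omega
        · have := hS' x h5; omega
  · exact target_mem_LamS hSX _
      (mem_VsNM_of Lbl.A
        (Finset.union_subset (fun x hx => by
          have := Finset.mem_Icc.mp hx
          exact Finset.mem_Icc.mpr ⟨by omega, by omega⟩) hsub')
        (by rw [hcard1 _ _ (by omega)]; omega))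
      (fun T hT hk => core_neq hSX hi1 hmin hT hk _
        (Or.inr (Or.inr (Or.inr ⟨hjeven, rfl⟩))))
  · exact target_mem_LamS hSX _
      (mem_VsNM_of Lbl.B
        (Finset.union_subset (fun x hx => by
          have := Finset.mem_Icc.mp hx
          exact Finset.mem_Icc.mpr ⟨by omega, by omega⟩) hsub')
        (by rw [hcard1 _ _ (by omega)]; omega))
      (fun T hT hk => core_neq hSX hi1 hmin hT hk _ (Or.inr (Or.inl rfl)))
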